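/- For odd n, the number of F_q-points of the versal variety of type A_n (equations x_i x_i' = 1 + α·[i=1]·∏_{j~i} x_j with invertible parameter α attached to vertex 1) equals (q^{n+2} + 1)/(q + 1). -/

import Mathlib

set_option linter.unusedSectionVars false

open scoped Classical
open Finset

namespace VersalTypeA

variable {F : Type} [Field F] [Fintype F]

/-- number of solutions `z` to `s * z = r` -/
noncomputable def e (s r : F) : ℕ := Nat.card {z : F // s * z = r}

lemma e_of_ne {s : F} (hs : s ≠ 0) (r : F) : e s r = 1 := by
  have : Unique {z : F // s * z = r} := by
    refine ⟨⟨s⁻¹ * r, by field_simp⟩, ?_⟩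
    rintro ⟨z, hz⟩
    ext
    field_simp
    rw [eq_div_iff hs, mul_comm]
    exact hz
  rw [e, Nat.card_unique]

lemma e_zero (r : F) : e (0 : F) r = if r = 0 then Fintype.card F else 0 := by
  split_ifs with h
  · subst h
    have : ∀ z : F, (0 : F) * z = 0 := fun z => zero_mul z
    rw [e, Nat.card_congr (Equiv.subtypeUnivEquiv this), Nat.card_eq_fintype_card]
  · have : IsEmpty {z : F // (0 : F) * z = r} := by
      refine ⟨fun ⟨z, hz⟩ => h ?_⟩
      rw [← hz, zero_mul]
    rw [e, Nat.card_of_isEmpty]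

/-- the weight of an assignment: product of numbers of `x'` solutions. -/
noncomputable def V : F → List F → ℕ
  | _, [] => 1
  | a, [s] => e s (1 + a)
  | a, s :: u :: t => e s (1 + a * u) * V s (u :: t)

noncomputable def U (m : ℕ) (a s : F) : ℕ := ∑ y : Fin m → F, V a (s :: List.ofFn y)

noncomputable def T (m : ℕ) (a : F) : ℕ := ∑ x : Fin m → F, V a (List.ofFn x)

noncomputable def A (F : Type) [Field F] [Fintype F] (m : ℕ) : ℕ :=
  ∑ a ∈ univ.filter (fun a : F => a ≠ 0), T m a

lemma ofFn_cons {m : ℕ} (s : F) (y : Fin m → F) :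
    List.ofFn (Fin.cons s y) = s :: List.ofFn y := by
  rw [List.ofFn_succ]
  simp

lemma sum_pi_succ {m : ℕ} (g : (Fin (m + 1) → F) → ℕ) :
    ∑ x : Fin (m + 1) → F, g x = ∑ s : F, ∑ y : Fin m → F, g (Fin.cons s y) := by
  rw [← Equiv.sum_comp (Fin.consEquiv (fun _ : Fin (m + 1) => F)) g, Fintype.sum_prod_type]
  rfl

lemma T_succ (m : ℕ) (a : F) : T (m + 1) a = ∑ s : F, U m a s := by
  rw [T, sum_pi_succ]
  refine Finset.sum_congr rfl fun s _ => ?_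
  rw [U]
  refine Finset.sum_congr rfl fun y _ => ?_
  rw [ofFn_cons]

lemma U_zero (a s : F) : U 0 a s = e s (1 + a) := by
  simp [U, V]

lemma U_succ (m : ℕ) (a s : F) :
    U (m + 1) a s = ∑ u : F, e s (1 + a * u) * U m s u := by
  rw [U, sum_pi_succ (fun y => V a (s :: List.ofFn y))]
  refine Finset.sum_congr rfl fun u _ => ?_
  rw [U, Finset.mul_sum]
  refine Finset.sum_congr rfl fun y _ => ?_
  rw [ofFn_cons]
  rfl

lemma U_of_ne (m : ℕ) (a : F) {s : F} (hs : s ≠ 0) : U m a s = T m s := by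
  induction m generalizing a with
  | zero => simp [U_zero, T, e_of_ne hs, V]
  | succ m ih =>
      rw [U_succ, T_succ]
      refine Finset.sum_congr rfl fun u _ => ?_
      rw [e_of_ne hs, one_mul]


lemma one_add_eq_zero_iff {a : F} (u : F) (ha : a ≠ 0) : 1 + a * u = 0 ↔ u = -a⁻¹ := by
  constructor
  · intro h
    field_simp
    linear_combination h
  · rintro rfl
    field_simp
    ring

lemma U_succ_zero {a : F} (ha : a ≠ 0) (m : ℕ) :
    U (m + 1) a 0 = Fintype.card F * U m (0 : F) (-a⁻¹) := by
  rw [U_succ]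
  have he : ∀ u : F, e (0 : F) (1 + a * u) * U m (0 : F) u
      = if u = -a⁻¹ then Fintype.card F * U m (0 : F) (-a⁻¹) else 0 := by
    intro u
    rw [e_zero]
    by_cases h : u = -a⁻¹
    · subst h
      rw [if_pos ((one_add_eq_zero_iff _ ha).2 rfl), if_pos rfl]
    · rw [if_neg (fun hc => h ((one_add_eq_zero_iff _ ha).1 hc)), if_neg h, zero_mul]
  rw [Finset.sum_congr rfl fun u _ => he u, Finset.sum_ite_eq' univ (-a⁻¹)]
  simp

lemma U_succ_zero_zero (m : ℕ) : U (m + 1) (0 : F) 0 = 0 := by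
  rw [U_succ]
  refine Finset.sum_eq_zero fun u _ => ?_
  rw [zero_mul, add_zero, e_zero, if_neg one_ne_zero, zero_mul]

lemma U_zero_zero (a : F) : U 0 a 0 = if a = -1 then Fintype.card F else 0 := by
  rw [U_zero, e_zero]
  by_cases h : a = -1
  · subst h
    norm_num
  · rw [if_neg (fun hc => h (by linear_combination hc)), if_neg h]

/-- `k` is `q - 1`, the number of nonzero elements. -/
noncomputable def k (F : Type) [Field F] [Fintype F] : ℕ :=
  (univ.filter (fun a : F => a ≠ 0)).card

lemma k_add_one : k F + 1 = Fintype.card F := by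
  rw [k, Finset.filter_ne', Finset.card_erase_of_mem (Finset.mem_univ _), Finset.card_univ]
  exact Nat.succ_pred_eq_of_pos Fintype.card_pos

lemma sum_split_zero (f : F → ℕ) :
    ∑ s : F, f s = f 0 + ∑ s ∈ univ.filter (fun s : F => s ≠ 0), f s := by
  rw [Finset.filter_ne']
  exact (Finset.add_sum_erase univ f (Finset.mem_univ 0)).symm

lemma sum_neg_inv (f : F → ℕ) :
    ∑ a ∈ univ.filter (fun a : F => a ≠ 0), f (-a⁻¹)
      = ∑ u ∈ univ.filter (fun u : F => u ≠ 0), f u := by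
  refine Finset.sum_nbij' (fun a => -a⁻¹) (fun u => -u⁻¹) ?_ ?_ ?_ ?_ ?_
  · intro a ha
    simp only [Finset.mem_filter, Finset.mem_univ, true_and] at *
    simp [ha]
  · intro u hu
    simp only [Finset.mem_filter, Finset.mem_univ, true_and] at *
    simp [hu]
  · intro a ha
    simp only [Finset.mem_filter, Finset.mem_univ, true_and] at ha
    field_simp
  · intro u hu
    simp only [Finset.mem_filter, Finset.mem_univ, true_and] at hu
    field_simp
  · intro a _
    rfl

lemma sum_T_ne (m : ℕ) : ∑ s ∈ univ.filter (fun s : F => s ≠ 0), T m s = A F m := rfl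

lemma T_succ_succ {a : F} (ha : a ≠ 0) (m : ℕ) :
    T (m + 2) a = Fintype.card F * U m (0 : F) (-a⁻¹) + A F (m + 1) := by
  rw [T_succ, sum_split_zero (fun s => U (m + 1) a s), U_succ_zero ha, ← sum_T_ne]
  congr 1
  refine Finset.sum_congr rfl fun s hs => ?_
  simp only [Finset.mem_filter, Finset.mem_univ, true_and] at hs
  exact U_of_ne _ _ hs

lemma A_rec (m : ℕ) : A F (m + 3) = (k F) * (A F (m + 2) : ℕ) + Fintype.card F * A F (m + 1)
    := by
  have h1 : ∀ a ∈ univ.filter (fun a : F => a ≠ 0),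
      T (m + 3) a = Fintype.card F * U (m + 1) (0 : F) (-a⁻¹) + A F (m + 2) := by
    intro a ha
    simp only [Finset.mem_filter, Finset.mem_univ, true_and] at ha
    exact T_succ_succ ha (m + 1)
  rw [show A F (m + 3) = ∑ a ∈ univ.filter (fun a : F => a ≠ 0), T (m + 3) a from rfl,
    Finset.sum_congr rfl h1, Finset.sum_add_distrib, Finset.sum_const, smul_eq_mul,
    ← Finset.mul_sum, sum_neg_inv (fun u => U (m + 1) (0 : F) u)]
  have h2 : ∑ u ∈ univ.filter (fun u : F => u ≠ 0), U (m + 1) (0 : F) u = A F (m + 1) := by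
    rw [← sum_T_ne]
    refine Finset.sum_congr rfl fun u hu => ?_
    simp only [Finset.mem_filter, Finset.mem_univ, true_and] at hu
    exact U_of_ne _ _ hu
  rw [h2, k, add_comm]

lemma T_one (a : F) : T 1 a = (if a = -1 then Fintype.card F else 0) + k F := by
  rw [T_succ, sum_split_zero (fun s => U 0 a s), U_zero_zero]
  congr 1
  rw [k, Finset.sum_congr rfl (fun s hs => by
    simp only [Finset.mem_filter, Finset.mem_univ, true_and] at hs
    rw [U_zero, e_of_ne hs])]
  simp

lemma A_one : A F 1 = Fintype.card F + (k F) * (k F) := by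
  rw [show A F 1 = ∑ a ∈ univ.filter (fun a : F => a ≠ 0), T 1 a from rfl,
    Finset.sum_congr rfl (fun a _ => T_one a), Finset.sum_add_distrib, Finset.sum_const,
    smul_eq_mul, ← k]
  congr 1
  rw [Finset.sum_ite_eq' (univ.filter (fun a : F => a ≠ 0)) (-1 : F)
    (fun _ => Fintype.card F), if_pos]
  simp [neg_ne_zero]

lemma A_two : A F 2 = (k F) * (Fintype.card F + A F 1) := by
  have hT : ∀ a ∈ univ.filter (fun a : F => a ≠ 0), T 2 a = Fintype.card F + A F 1 := by
    intro a ha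
    simp only [Finset.mem_filter, Finset.mem_univ, true_and] at ha
    rw [T_succ_succ ha 0, U_zero, add_zero, e_of_ne (by simp [ha]) 1, mul_one]
  rw [show A F 2 = ∑ a ∈ univ.filter (fun a : F => a ≠ 0), T 2 a from rfl,
    Finset.sum_congr rfl hT, Finset.sum_const, smul_eq_mul, ← k]


lemma main_ind (j : ℕ) :
    (Fintype.card F + 1) * A F (2 * j + 1) = Fintype.card F ^ (2 * j + 3) + 1 ∧
    (Fintype.card F + 1) * A F (2 * j + 2) + 1 = Fintype.card F ^ (2 * j + 4) := by
  have hq : Fintype.card F = k F + 1 := (k_add_one (F := F)).symm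
  induction j with
  | zero =>
      constructor
      · rw [show 2 * 0 + 1 = 1 from rfl, A_one, hq]
        ring
      · rw [show 2 * 0 + 2 = 2 from rfl, A_two, A_one, hq]
        ring
  | succ j ih =>
      obtain ⟨H1, H2⟩ := ih
      have r1 : A F (2 * j + 3) = k F * A F (2 * j + 2) + Fintype.card F * A F (2 * j + 1) :=
        A_rec (2 * j)
      have r2 : A F (2 * j + 4) = k F * A F (2 * j + 3) + Fintype.card F * A F (2 * j + 2) := by
        have := A_rec (F := F) (2 * j + 1)
        convert this using 3 <;> ring
      have G1 : (Fintype.card F + 1) * A F (2 * j + 3) = Fintype.card F ^ (2 * j + 3)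
          * Fintype.card F * Fintype.card F + 1 := by
        rw [r1]
        zify at H1 H2 hq ⊢
        linear_combination (k F : ℤ) * H2 + (Fintype.card F : ℤ) * H1
          + (1 - (Fintype.card F : ℤ) * (Fintype.card F : ℤ) ^ (2 * j + 3)) * hq
      have G2 : (Fintype.card F + 1) * A F (2 * j + 4) + 1 = Fintype.card F ^ (2 * j + 3)
          * Fintype.card F * Fintype.card F * Fintype.card F := by
        rw [r2]
        zify at H1 H2 hq G1 ⊢
        linear_combination (k F : ℤ) * G1 + (Fintype.card F : ℤ) * H2
          - ((Fintype.card F : ℤ) * (Fintype.card F : ℤ) * (Fintype.card F : ℤ) ^ (2 * j + 3) + 1) * hq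
      constructor
      · rw [show 2 * (j + 1) + 1 = 2 * j + 3 from by ring,
          show 2 * (j + 1) + 3 = (2 * j + 3) + 1 + 1 from by ring, pow_succ, pow_succ]
        exact G1
      · rw [show 2 * (j + 1) + 2 = 2 * j + 4 from by ring,
          show 2 * (j + 1) + 4 = (2 * j + 3) + 1 + 1 + 1 from by ring,
          pow_succ, pow_succ, pow_succ]
        exact G2

lemma A_odd {n : ℕ} (hn : Odd n) :
    (Fintype.card F + 1) * A F n = Fintype.card F ^ (n + 2) + 1 := by
  obtain ⟨j, rfl⟩ := hn
  have := (main_ind (F := F) j).1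
  rw [show 2 * j + 1 + 2 = 2 * j + 3 from by ring]
  exact this

lemma nbr_prod (n : ℕ) (x : Fin n → F) (i : Fin n) :
    ∏ j ∈ univ.filter (fun j => (SimpleGraph.pathGraph n).Adj i j), x j
      = (if h : (i : ℕ) + 1 < n then x ⟨(i : ℕ) + 1, h⟩ else 1)
        * (if _ : 0 < (i : ℕ) then
            x ⟨(i : ℕ) - 1, Nat.lt_of_le_of_lt (Nat.sub_le _ _) i.isLt⟩ else 1) := by
  have hi := i.isLt
  by_cases h1 : (i : ℕ) + 1 < n <;> by_cases h2 : 0 < (i : ℕ)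
  · have hset : univ.filter (fun j => (SimpleGraph.pathGraph n).Adj i j)
        = {(⟨(i : ℕ) + 1, h1⟩ : Fin n),
           ⟨(i : ℕ) - 1, Nat.lt_of_le_of_lt (Nat.sub_le _ _) i.isLt⟩} := by
      ext j
      have hj := j.isLt
      simp only [Finset.mem_filter, Finset.mem_univ, true_and, SimpleGraph.pathGraph_adj,
        Finset.mem_insert, Finset.mem_singleton, Fin.ext_iff]
      omega
    rw [hset, Finset.prod_pair (by simp only [ne_eq, Fin.ext_iff]; omega),
      dif_pos h1, dif_pos h2]
  · have hset : univ.filter (fun j => (SimpleGraph.pathGraph n).Adj i j)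
        = {(⟨(i : ℕ) + 1, h1⟩ : Fin n)} := by
      ext j
      have hj := j.isLt
      simp only [Finset.mem_filter, Finset.mem_univ, true_and, SimpleGraph.pathGraph_adj,
        Finset.mem_singleton, Fin.ext_iff]
      omega
    rw [hset, Finset.prod_singleton, dif_pos h1, dif_neg h2, mul_one]
  · have hset : univ.filter (fun j => (SimpleGraph.pathGraph n).Adj i j)
        = {(⟨(i : ℕ) - 1, Nat.lt_of_le_of_lt (Nat.sub_le _ _) i.isLt⟩ : Fin n)} := by
      ext j
      have hj := j.isLt
      simp only [Finset.mem_filter, Finset.mem_univ, true_and, SimpleGraph.pathGraph_adj,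
        Finset.mem_singleton, Fin.ext_iff]
      omega
    rw [hset, Finset.prod_singleton, dif_neg h1, dif_pos h2, one_mul]
  · have hset : univ.filter (fun j => (SimpleGraph.pathGraph n).Adj i j)
        = (∅ : Finset (Fin n)) := by
      ext j
      have hj := j.isLt
      simp only [Finset.mem_filter, Finset.mem_univ, true_and, SimpleGraph.pathGraph_adj,
        Finset.notMem_empty, iff_false]
      omega
    rw [hset, Finset.prod_empty, dif_neg h1, dif_neg h2, mul_one]

lemma nbr_zero (m : ℕ) (x : Fin (m + 2) → F) :
    ∏ j ∈ univ.filter (fun j => (SimpleGraph.pathGraph (m + 2)).Adj 0 j), x j = x 1 := by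
  rw [nbr_prod]
  rw [dif_pos (by simp : ((0 : Fin (m + 2)) : ℕ) + 1 < m + 2), dif_neg (by simp), mul_one]
  congr 1

lemma nbr_single (x : Fin 1 → F) :
    ∏ j ∈ univ.filter (fun j => (SimpleGraph.pathGraph 1).Adj 0 j), x j = 1 := by
  rw [nbr_prod, dif_neg (by simp), dif_neg (by simp), mul_one]


lemma nbr_succ (m : ℕ) (x : Fin (m + 2) → F) (i : Fin (m + 1)) :
    ∏ j ∈ univ.filter (fun j => (SimpleGraph.pathGraph (m + 2)).Adj i.succ j), x j
      = (if (i : ℕ) = 0 then x 0 else 1) *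
        ∏ j ∈ univ.filter (fun j => (SimpleGraph.pathGraph (m + 1)).Adj i j), x j.succ := by
  have hi := i.isLt
  rw [nbr_prod, nbr_prod]
  have hsv : ((i.succ : Fin (m + 2)) : ℕ) = (i : ℕ) + 1 := Fin.val_succ i
  by_cases h0 : (i : ℕ) = 0
  · rw [if_pos h0]
    rw [dif_neg (by omega : ¬ 0 < (i : ℕ))]
    rw [dif_pos (by omega : 0 < ((i.succ : Fin (m + 2)) : ℕ))]
    by_cases h1 : (i : ℕ) + 1 < m + 1
    · rw [dif_pos (by omega : ((i.succ : Fin (m + 2)) : ℕ) + 1 < m + 2), dif_pos h1]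
      have e1 : (⟨((i.succ : Fin (m + 2)) : ℕ) + 1, by omega⟩ : Fin (m + 2))
          = (⟨(i : ℕ) + 1, h1⟩ : Fin (m + 1)).succ := Fin.ext (by simp [hsv])
      have e2 : (⟨((i.succ : Fin (m + 2)) : ℕ) - 1, by omega⟩ : Fin (m + 2)) = 0 :=
        Fin.ext (by simp [hsv, h0])
      rw [e1, e2, mul_one, mul_comm]
    · rw [dif_neg (by omega : ¬ (((i.succ : Fin (m + 2)) : ℕ) + 1 < m + 2)), dif_neg h1]
      have e2 : (⟨((i.succ : Fin (m + 2)) : ℕ) - 1, by omega⟩ : Fin (m + 2)) = 0 :=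
        Fin.ext (by simp [hsv, h0])
      simp only [one_mul, mul_one]
      exact congrArg x e2
  · rw [if_neg h0, one_mul]
    rw [dif_pos (by omega : 0 < ((i.succ : Fin (m + 2)) : ℕ)), dif_pos (by omega : 0 < (i : ℕ))]
    have e2 : (⟨((i.succ : Fin (m + 2)) : ℕ) - 1, by omega⟩ : Fin (m + 2))
        = (⟨(i : ℕ) - 1, by omega⟩ : Fin (m + 1)).succ := Fin.ext (by simp [hsv]; omega)
    rw [e2]
    by_cases h1 : (i : ℕ) + 1 < m + 1
    · rw [dif_pos (by omega : ((i.succ : Fin (m + 2)) : ℕ) + 1 < m + 2), dif_pos h1]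
      have e1 : (⟨((i.succ : Fin (m + 2)) : ℕ) + 1, by omega⟩ : Fin (m + 2))
          = (⟨(i : ℕ) + 1, h1⟩ : Fin (m + 1)).succ := Fin.ext (by simp [hsv])
      rw [e1]
    · rw [dif_neg (by omega : ¬ (((i.succ : Fin (m + 2)) : ℕ) + 1 < m + 2)), dif_neg h1]

lemma prod_e_eq_V (n : ℕ) (a : F) (x : Fin n → F) :
    (∏ i : Fin n, e (x i) (1 + (if (i : ℕ) = 0 then a else 1) *
      ∏ j ∈ univ.filter (fun j => (SimpleGraph.pathGraph n).Adj i j), x j))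
      = V a (List.ofFn x) := by
  induction n generalizing a with
  | zero => simp [V]
  | succ n ih =>
    rw [Fin.prod_univ_succ]
    cases n with
    | zero =>
        rw [List.ofFn_succ]
        simp only [List.ofFn_zero]
        rw [show V a [x 0] = e (x 0) (1 + a) from rfl, nbr_single x]
        simp
    | succ m =>
        rw [List.ofFn_succ]
        have hV : V a (x 0 :: List.ofFn fun i : Fin (m + 1) => x i.succ)
            = e (x 0) (1 + a * x 1) * V (x 0) (List.ofFn fun i : Fin (m + 1) => x i.succ) := by
          rw [List.ofFn_succ]
          show V a (x 0 :: x (Fin.succ 0) :: _) = _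
          rw [Fin.succ_zero_eq_one]
          rfl
        rw [hV, ← ih (x 0) (fun i => x i.succ)]
        congr 1
        · rw [nbr_zero]
          norm_num
        · refine Finset.prod_congr rfl fun i _ => ?_
          congr 1
          rw [nbr_succ m x i]
          rw [if_neg (by simp [Fin.val_succ] : ¬ ((i.succ : Fin (m + 2)) : ℕ) = 0), one_mul]

lemma nat_card_sigma {ι : Type} [Fintype ι] (f : ι → Type) [∀ i, Fintype (f i)] :
    Nat.card ((i : ι) × f i) = ∑ i, Nat.card (f i) := by
  simp [Nat.card_eq_fintype_card]

lemma card_fiber (n : ℕ) (c r : Fin n → F) :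
    Nat.card {y : Fin n → F // ∀ i, c i * y i = r i} = ∏ i, e (c i) (r i) := by
  rw [Nat.card_congr (Equiv.subtypePiEquivPi (p := fun i z => c i * z = r i)), Nat.card_pi]
  rfl

lemma card_eq_A (n : ℕ) :
    Nat.card {p : (Fin n → F) × (Fin n → F) × F //
        p.2.2 ≠ 0 ∧ ∀ i : Fin n, p.1 i * p.2.1 i =
          1 + (if (i : ℕ) = 0 then p.2.2 else 1) *
            ∏ j ∈ Finset.univ.filter (fun j => (SimpleGraph.pathGraph n).Adj i j), p.1 j}
      = A F n := by
  classical
  have E : {p : (Fin n → F) × (Fin n → F) × F //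
        p.2.2 ≠ 0 ∧ ∀ i : Fin n, p.1 i * p.2.1 i =
          1 + (if (i : ℕ) = 0 then p.2.2 else 1) *
            ∏ j ∈ Finset.univ.filter (fun j => (SimpleGraph.pathGraph n).Adj i j), p.1 j}
      ≃ (w : {w : (Fin n → F) × F // w.2 ≠ 0}) ×
          {y : Fin n → F // ∀ i : Fin n, w.1.1 i * y i =
            1 + (if (i : ℕ) = 0 then w.1.2 else 1) *
              ∏ j ∈ Finset.univ.filter (fun j => (SimpleGraph.pathGraph n).Adj i j), w.1.1 j} :=
    { toFun := fun p => ⟨⟨(p.1.1, p.1.2.2), p.2.1⟩, ⟨p.1.2.1, p.2.2⟩⟩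
      invFun := fun w => ⟨(w.1.1.1, w.2.1, w.1.1.2), ⟨w.1.2, w.2.2⟩⟩
      left_inv := fun p => rfl
      right_inv := fun w => rfl }
  rw [Nat.card_congr E, nat_card_sigma]
  have h1 : ∀ w : {w : (Fin n → F) × F // w.2 ≠ 0},
      Nat.card {y : Fin n → F // ∀ i : Fin n, w.1.1 i * y i =
          1 + (if (i : ℕ) = 0 then w.1.2 else 1) *
            ∏ j ∈ Finset.univ.filter (fun j => (SimpleGraph.pathGraph n).Adj i j), w.1.1 j}
        = V w.1.2 (List.ofFn w.1.1) := by
    intro w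
    rw [card_fiber n w.1.1 (fun i => 1 + (if (i : ℕ) = 0 then w.1.2 else 1) *
      ∏ j ∈ Finset.univ.filter (fun j => (SimpleGraph.pathGraph n).Adj i j), w.1.1 j)]
    exact prod_e_eq_V n w.1.2 w.1.1
  rw [Finset.sum_congr rfl fun w _ => h1 w]
  rw [← Finset.sum_subtype (univ.filter (fun w : (Fin n → F) × F => w.2 ≠ 0))
    (fun w => by simp) (fun w : (Fin n → F) × F => V w.2 (List.ofFn w.1))]
  rw [Finset.sum_filter, Fintype.sum_prod_type, Finset.sum_comm]
  rw [show A F n = ∑ b ∈ univ.filter (fun b : F => b ≠ 0), T n b from rfl, Finset.sum_filter]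
  refine Finset.sum_congr rfl fun b _ => ?_
  by_cases hb : b ≠ 0
  · rw [if_pos hb, T]
    rw [Finset.sum_congr rfl fun x _ => if_pos hb]
  · rw [if_neg hb]
    exact Finset.sum_eq_zero fun x _ => if_neg hb

end VersalTypeA

/-- For odd `n`, the number of `F_q`-points of the versal variety of type `A_n`
(equations `x_i x_i' = 1 + α^{[i=1]} ∏_{j ~ i} x_j` over the path graph, with
an invertible parameter `α` attached to the first vertex) is
`(q^{n+2} + 1)/(q + 1)`. -/
theorem card_typeA_odd_versal (F : Type) [Field F] [Fintype F] (n : ℕ)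
    (hn : Odd n) :
    Nat.card {p : (Fin n → F) × (Fin n → F) × F //
        p.2.2 ≠ 0 ∧ ∀ i : Fin n, p.1 i * p.2.1 i =
          1 + (if i.val = 0 then p.2.2 else 1) *
            ∏ j ∈ Finset.univ.filter (fun j => (SimpleGraph.pathGraph n).Adj i j), p.1 j}
      * (Fintype.card F + 1)
      = Fintype.card F ^ (n + 2) + 1 := by
  rw [VersalTypeA.card_eq_A n, mul_comm]
  exact VersalTypeA.A_odd hn
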